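/- Let D be a dendrite and T ⊆ D a subcontinuum that is the union of finitely many arcs γ_{ij} joining points A_1,...,A_n. If a point p ∈ T satisfies γ_{j₁ i} ∩ γ_{j₂ i} = {p} for some arcs γ_{j₁ i}, γ_{j₂ i} ⊆ T with p = A_i an endpoint of both, then p is a cut point of T. -/

import Mathlib

open unitInterval Set

/-- `A` is an arc in `X` from `a` to `b`. -/
def IsArc {X : Type*} [TopologicalSpace X] (A : Set X) (a b : X) : Prop :=
  ∃ φ : I → X, Continuous φ ∧ Function.Injective φ ∧
    Set.range φ = A ∧ φ 0 = a ∧ φ 1 = b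

section Aux
variable {D : Type*} [MetricSpace D]

lemma IsArc.symm {A : Set D} {a b : D} (h : IsArc A a b) : IsArc A b a := by
  obtain ⟨φ, hc, hi, hr, h0, h1⟩ := h
  refine ⟨φ ∘ unitInterval.symm, hc.comp continuous_symm,
    hi.comp (fun u v h => by
      have := congrArg unitInterval.symm h
      rwa [unitInterval.symm_symm, unitInterval.symm_symm] at this), ?_, by simp [h1], by simp [h0]⟩
  rw [Set.range_comp, ← hr]
  congr 1
  exact Set.range_eq_univ.mpr (fun u => ⟨unitInterval.symm u, unitInterval.symm_symm u⟩) ▸ Set.image_univ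

lemma subarc (φ : I → D) (hc : Continuous φ) (hi : Function.Injective φ) {s t : I}
    (hst : s < t) : IsArc (φ '' Set.Icc s t) (φ s) (φ t) := by
  have hstr : (s : ℝ) < t := hst
  have hd : (0:ℝ) < t - s := by linarith
  have hmem : ∀ u : I, (s : ℝ) + u * (t - s) ∈ Set.Icc (0:ℝ) 1 := by
    intro u
    constructor
    · nlinarith [u.2.1, s.2.1]
    · nlinarith [u.2.2, t.2.2]
  set sg : I → I := fun u => ⟨(s : ℝ) + u * (t - s), hmem u⟩ with hsg
  have hsgc : Continuous sg :=
    Continuous.subtype_mk (continuous_const.add (continuous_subtype_val.mul continuous_const)) _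
  have hsgi : Function.Injective sg := by
    intro u v h
    have : (s:ℝ) + u * (t - s) = (s:ℝ) + v * (t - s) := congrArg Subtype.val h
    have : (u:ℝ) = v := by
      exact mul_right_cancel₀ hd.ne' (by linarith)
    exact Subtype.ext this
  have hsgr : Set.range sg = Set.Icc s t := by
    ext r
    constructor
    · rintro ⟨u, rfl⟩
      constructor
      · show (s:ℝ) ≤ (s:ℝ) + u * (t - s); nlinarith [u.2.1]
      · show (s:ℝ) + u * (t - s) ≤ (t:ℝ); nlinarith [u.2.2]
    · rintro ⟨h1, h2⟩
      have h1 : (s:ℝ) ≤ r := h1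
      have h2 : (r:ℝ) ≤ t := h2
      refine ⟨⟨((r:ℝ) - s) / (t - s), ⟨div_nonneg (by linarith) hd.le, by rw [div_le_one hd]; linarith⟩⟩, ?_⟩
      apply Subtype.ext
      show (s:ℝ) + ((r:ℝ) - s) / (t - s) * (t - s) = r
      field_simp
      ring
  refine ⟨φ ∘ sg, hc.comp hsgc, hi.comp hsgi, by rw [Set.range_comp, hsgr], ?_, ?_⟩
  · show φ (sg 0) = φ s
    congr 1
    apply Subtype.ext
    show (s:ℝ) + (0:ℝ) * (t - s) = s
    ring
  · show φ (sg 1) = φ t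
    congr 1
    apply Subtype.ext
    show (s:ℝ) + (1:ℝ) * (t - s) = t
    ring

lemma concatArc {A₁ A₂ : Set D} {a m c : D} (h₁ : IsArc A₁ a m) (h₂ : IsArc A₂ m c)
    (hm : A₁ ∩ A₂ ⊆ {m}) : IsArc (A₁ ∪ A₂) a c := by
  obtain ⟨φ₁, hc₁, hi₁, hr₁, h10, h11⟩ := h₁
  obtain ⟨φ₂, hc₂, hi₂, hr₂, h20, h21⟩ := h₂
  set P₁ : Path a m := ⟨⟨φ₁, hc₁⟩, h10, h11⟩ with hP₁
  set P₂ : Path m c := ⟨⟨φ₂, hc₂⟩, h20, h21⟩ with hP₂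
  have hP₁e : ∀ u, P₁ u = φ₁ u := fun u => rfl
  have hP₂e : ∀ u, P₂ u = φ₂ u := fun u => rfl
  refine ⟨(P₁.trans P₂ : I → D), (P₁.trans P₂).continuous, ?_, ?_, P₁.trans P₂ |>.source,
    P₁.trans P₂ |>.target⟩
  · have key : ∀ w₁ w₂ : I, φ₁ w₁ = φ₂ w₂ → w₁ = 1 ∧ w₂ = 0 := by
      intro w₁ w₂ hw
      have hx : φ₁ w₁ ∈ A₁ ∩ A₂ := ⟨hr₁ ▸ Set.mem_range_self _, hw ▸ hr₂ ▸ Set.mem_range_self _⟩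
      have hxm : φ₁ w₁ = m := hm hx
      exact ⟨hi₁ (hxm.trans h11.symm), hi₂ ((hw.symm.trans hxm).trans h20.symm)⟩
    intro u v h
    rw [Path.trans_apply, Path.trans_apply] at h
    split_ifs at h with hu hv hv
    · have e := hi₁ h
      have : 2 * (u:ℝ) = 2 * (v:ℝ) := congrArg Subtype.val e
      exact Subtype.ext (by linarith)
    · exfalso
      obtain ⟨e1, e2⟩ := key _ _ h
      have : 2 * (v:ℝ) - 1 = 0 := congrArg Subtype.val e2
      exact hv (by linarith)
    · exfalso
      obtain ⟨e1, e2⟩ := key _ _ h.symm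
      have : 2 * (u:ℝ) - 1 = 0 := congrArg Subtype.val e2
      exact hu (by linarith)
    · have e := hi₂ h
      have : 2 * (u:ℝ) - 1 = 2 * (v:ℝ) - 1 := congrArg Subtype.val e
      exact Subtype.ext (by linarith)
  · rw [Path.trans_range, ← hr₁, ← hr₂]
    rfl

end Aux

section ArcLemmas
variable {D : Type*} [MetricSpace D] {arc : D → D → Set D}

lemma arc_closed (harc : ∀ a b : D, a ≠ b → IsArc (arc a b) a b)
    (harc_refl : ∀ a : D, arc a a = {a}) (a b : D) : IsClosed (arc a b) := by
  by_cases h : a = b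
  · subst h; rw [harc_refl]; exact isClosed_singleton
  · obtain ⟨φ, hc, hi, hr, h0, h1⟩ := harc a b h
    rw [← hr]
    exact (isCompact_range hc).isClosed

lemma left_mem (harc : ∀ a b : D, a ≠ b → IsArc (arc a b) a b)
    (harc_refl : ∀ a : D, arc a a = {a}) (a b : D) : a ∈ arc a b := by
  by_cases h : a = b
  · subst h; rw [harc_refl]; exact rfl
  · obtain ⟨φ, hc, hi, hr, h0, h1⟩ := harc a b h
    exact hr ▸ h0 ▸ Set.mem_range_self 0

lemma right_mem (harc : ∀ a b : D, a ≠ b → IsArc (arc a b) a b)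
    (harc_refl : ∀ a : D, arc a a = {a}) (a b : D) : b ∈ arc a b := by
  by_cases h : a = b
  · subst h; rw [harc_refl]; exact rfl
  · obtain ⟨φ, hc, hi, hr, h0, h1⟩ := harc a b h
    exact hr ▸ h1 ▸ Set.mem_range_self 1

lemma arc_symm (harc : ∀ a b : D, a ≠ b → IsArc (arc a b) a b)
    (harc_uniq : ∀ (a b : D) (A : Set D), a ≠ b → IsArc A a b → A = arc a b)
    (a b : D) : arc a b = arc b a := by
  by_cases h : a = b
  · subst h; rfl
  · exact harc_uniq b a (arc a b) (Ne.symm h) (harc a b h).symm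

lemma arc_eq_image_uIcc (harc : ∀ a b : D, a ≠ b → IsArc (arc a b) a b)
    (harc_uniq : ∀ (a b : D) (A : Set D), a ≠ b → IsArc A a b → A = arc a b)
    (harc_refl : ∀ a : D, arc a a = {a})
    (φ : I → D) (hc : Continuous φ) (hi : Function.Injective φ) (s t : I) :
    arc (φ s) (φ t) = φ '' Set.uIcc s t := by
  rcases lt_trichotomy s t with hst | hst | hst
  · rw [Set.uIcc_of_le hst.le]
    exact (harc_uniq _ _ _ (fun e => hst.ne (hi e)) (subarc φ hc hi hst)).symm
  · subst hst; rw [harc_refl, Set.uIcc_self, Set.image_singleton]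
  · rw [Set.uIcc_of_ge hst.le, arc_symm harc harc_uniq]
    exact (harc_uniq _ _ _ (fun e => hst.ne (hi e)) (subarc φ hc hi hst)).symm

lemma trans_side (harc : ∀ a b : D, a ≠ b → IsArc (arc a b) a b)
    (harc_uniq : ∀ (a b : D) (A : Set D), a ≠ b → IsArc A a b → A = arc a b)
    (harc_refl : ∀ a : D, arc a a = {a}) {p x y z : D}
    (hxy : p ∉ arc x y) (hyz : p ∉ arc y z) : p ∉ arc x z := by
  have hpx : p ≠ x := fun e => hxy (e ▸ left_mem harc harc_refl x y)
  by_cases hxz : x = z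
  · subst hxz; rw [harc_refl]; exact fun h => hpx (Set.mem_singleton_iff.mp h)
  by_cases hxy' : x = y
  · subst hxy'; exact hyz
  by_cases hyz' : y = z
  · subst hyz'; exact hxy
  obtain ⟨φ, φc, φi, φr, φ0, φ1⟩ := harc x y hxy'
  obtain ⟨ψ, ψc, ψi, ψr, ψ0, ψ1⟩ := harc y z hyz'
  set S : Set I := {t | ψ t ∈ arc x y} with hSdef
  have hS0 : (0 : I) ∈ S := by
    show ψ 0 ∈ arc x y
    rw [ψ0]; exact right_mem harc harc_refl x y
  have hScl : IsClosed S := (arc_closed harc harc_refl x y).preimage ψc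
  have hScpt : IsCompact (Subtype.val '' S : Set ℝ) :=
    (hScl.isCompact).image continuous_subtype_val
  obtain ⟨t₀r, ht₀r, ht₀ub⟩ := hScpt.exists_isGreatest ⟨0, 0, hS0, rfl⟩
  obtain ⟨t₀, ht₀S, ht₀v⟩ := ht₀r
  have ht₀max : ∀ t ∈ S, t ≤ t₀ := by
    intro t ht
    have : (t : ℝ) ≤ t₀r := ht₀ub ⟨t, ht, rfl⟩
    exact Subtype.coe_le_coe.mp (ht₀v ▸ this)
  set m := ψ t₀ with hmdef
  have hmxy : m ∈ arc x y := ht₀S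
  by_cases ht1 : t₀ = (1 : I)
  · -- z ∈ arc x y; arc x z ⊆ arc x y
    have hz : z ∈ arc x y := by rw [hmdef, ht1, ψ1] at hmxy; exact hmxy
    obtain ⟨s, hs⟩ : z ∈ Set.range φ := φr ▸ hz
    have : arc x z = φ '' Set.uIcc 0 s := by
      rw [← φ0, ← hs]; exact arc_eq_image_uIcc harc harc_uniq harc_refl φ φc φi 0 s
    intro hpmem
    rw [this] at hpmem
    exact hxy (φr ▸ Set.image_subset_range φ _ hpmem)
  have ht01 : t₀ < 1 := lt_of_le_of_ne le_one' ht1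
  have tail : IsArc (ψ '' Set.Icc t₀ 1) m z := by
    have := subarc ψ ψc ψi ht01; rwa [ψ1] at this
  have htail_inter : ∀ w ∈ (ψ '' Set.Icc t₀ 1) ∩ arc x y, w = m := by
    rintro w ⟨⟨r, hr, rfl⟩, hw2⟩
    have h1 : r ≤ t₀ := ht₀max r hw2
    rw [le_antisymm h1 hr.1]
  by_cases hmx : m = x
  · have harcz : arc x z = ψ '' Set.Icc t₀ 1 := (harc_uniq x z _ hxz (hmx ▸ tail)).symm
    intro hpmem
    rw [harcz] at hpmem
    exact hyz (ψr ▸ Set.image_subset_range ψ _ hpmem)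
  · obtain ⟨s, hs⟩ : m ∈ Set.range φ := φr ▸ hmxy
    have hs0 : (0 : I) < s := by
      refine lt_of_le_of_ne nonneg' (fun e => hmx ?_)
      rw [← hs, ← e, φ0]
    have head : IsArc (φ '' Set.Icc 0 s) x m := by
      have := subarc φ φc φi hs0; rwa [φ0, hs] at this
    have hHT : (φ '' Set.Icc 0 s) ∩ (ψ '' Set.Icc t₀ 1) ⊆ {m} := by
      rintro w ⟨hw1, hw2⟩
      exact htail_inter w ⟨hw2, φr ▸ Set.image_subset_range φ _ hw1⟩
    have comb : IsArc ((φ '' Set.Icc 0 s) ∪ (ψ '' Set.Icc t₀ 1)) x z := concatArc head tail hHT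
    have harcz : arc x z = (φ '' Set.Icc 0 s) ∪ (ψ '' Set.Icc t₀ 1) :=
      (harc_uniq x z _ hxz comb).symm
    intro hpmem
    rw [harcz] at hpmem
    rcases hpmem with h | h
    · exact hxy (φr ▸ Set.image_subset_range φ _ h)
    · exact hyz (ψr ▸ Set.image_subset_range ψ _ h)

end ArcLemmas

section Trace
variable {D : Type*} [MetricSpace D] {arc : D → D → Set D}

lemma trace_piece {p : D} {R : D → Prop}
    (hR : ∀ x y : D, p ∉ arc x y → R x → R y)
    (harc : ∀ a b : D, a ≠ b → IsArc (arc a b) a b)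
    (harc_uniq : ∀ (a b : D) (A : Set D), a ≠ b → IsArc A a b → A = arc a b)
    (harc_refl : ∀ a : D, arc a a = {a})
    (J : Set D) (hJ : IsClosed J)
    (hpair : ∀ x ∈ J, ∀ y ∈ J, x ≠ p → y ≠ p → p ∉ arc x y) :
    IsClosed {x ∈ J | x = p ∨ R x} := by
  by_cases h : ∃ x ∈ J, x ≠ p ∧ R x
  · obtain ⟨x₀, hx₀J, hx₀p, hRx₀⟩ := h
    have : {x ∈ J | x = p ∨ R x} = J := by
      apply Set.eq_of_subset_of_subset (fun x hx => hx.1)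
      intro y hyJ
      by_cases hyp : y = p
      · exact ⟨hyJ, Or.inl hyp⟩
      · exact ⟨hyJ, Or.inr (hR x₀ y (hpair x₀ hx₀J y hyJ hx₀p hyp) hRx₀)⟩
    rw [this]; exact hJ
  · have hsub : {x ∈ J | x = p ∨ R x} ⊆ {p} := by
      rintro x ⟨hxJ, hx⟩
      rcases hx with hx | hx
      · exact hx
      · by_contra hxp
        exact h ⟨x, hxJ, fun e => hxp e, hx⟩
    exact ((Set.finite_singleton p).subset hsub).isClosed

lemma trace_closed {p : D} {R : D → Prop}
    (hR : ∀ x y : D, p ∉ arc x y → R x → R y)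
    (harc : ∀ a b : D, a ≠ b → IsArc (arc a b) a b)
    (harc_uniq : ∀ (a b : D) (A : Set D), a ≠ b → IsArc A a b → A = arc a b)
    (harc_refl : ∀ a : D, arc a a = {a})
    (a b : D) : IsClosed {x ∈ arc a b | x = p ∨ R x} := by
  by_cases hab : a = b
  · subst hab
    refine trace_piece hR harc harc_uniq harc_refl (arc a a) (harc_refl a ▸ isClosed_singleton)
      ?_
    intro x hx y hy hxp hyp
    rw [harc_refl] at hx hy
    rw [Set.mem_singleton_iff.mp hx, Set.mem_singleton_iff.mp hy, harc_refl]
    rw [Set.mem_singleton_iff.mp hx] at hxp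
    exact fun e => hxp (Set.mem_singleton_iff.mp e).symm
  obtain ⟨φ, φc, φi, φr, φ0, φ1⟩ := harc a b hab
  have himg : ∀ s t t₀ : I, t₀ ∉ Set.uIcc s t → φ t₀ ∉ arc (φ s) (φ t) := by
    intro s t t₀ hmem hcon
    rw [arc_eq_image_uIcc harc harc_uniq harc_refl φ φc φi] at hcon
    obtain ⟨r, hr, hre⟩ := hcon
    exact hmem (φi hre ▸ hr)
  by_cases hp : p ∈ arc a b
  · obtain ⟨t₀, ht₀⟩ : p ∈ Set.range φ := φr ▸ hp
    have hdecomp : arc a b = (φ '' Set.Icc 0 t₀) ∪ (φ '' Set.Icc t₀ 1) := by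
      rw [← φr]
      ext w
      constructor
      · rintro ⟨u, rfl⟩
        rcases le_total u t₀ with h | h
        · exact Or.inl ⟨u, ⟨nonneg', h⟩, rfl⟩
        · exact Or.inr ⟨u, ⟨h, le_one'⟩, rfl⟩
      · rintro (⟨u, _, rfl⟩ | ⟨u, _, rfl⟩) <;> exact Set.mem_range_self u
    have hsplit : {x ∈ arc a b | x = p ∨ R x} =
        {x ∈ φ '' Set.Icc 0 t₀ | x = p ∨ R x} ∪ {x ∈ φ '' Set.Icc t₀ 1 | x = p ∨ R x} := by
      rw [hdecomp]
      ext w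
      constructor
      · rintro ⟨hw1 | hw1, hw2⟩
        · exact Or.inl ⟨hw1, hw2⟩
        · exact Or.inr ⟨hw1, hw2⟩
      · rintro (⟨hw1, hw2⟩ | ⟨hw1, hw2⟩)
        · exact ⟨Or.inl hw1, hw2⟩
        · exact ⟨Or.inr hw1, hw2⟩
    rw [hsplit]
    have hJcl : ∀ c d : I, IsClosed (φ '' Set.Icc c d) :=
      fun c d => ((isClosed_Icc.isCompact).image φc).isClosed
    refine IsClosed.union ?_ ?_
    · refine trace_piece hR harc harc_uniq harc_refl _ (hJcl 0 t₀) ?_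
      rintro x ⟨u, hu, rfl⟩ y ⟨v, hv, rfl⟩ hxp hyp
      rw [← ht₀]
      apply himg
      have hu' : u < t₀ := lt_of_le_of_ne hu.2 (fun e => hxp (e ▸ ht₀ ▸ rfl))
      have hv' : v < t₀ := lt_of_le_of_ne hv.2 (fun e => hyp (e ▸ ht₀ ▸ rfl))
      intro hcon
      rcases Set.mem_uIcc.mp hcon with ⟨h1, h2⟩ | ⟨h1, h2⟩
      · exact hv'.not_ge h2
      · exact hu'.not_ge h2
    · refine trace_piece hR harc harc_uniq harc_refl _ (hJcl t₀ 1) ?_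
      rintro x ⟨u, hu, rfl⟩ y ⟨v, hv, rfl⟩ hxp hyp
      rw [← ht₀]
      apply himg
      have hu' : t₀ < u := lt_of_le_of_ne hu.1 (fun e => hxp (e ▸ ht₀ ▸ rfl))
      have hv' : t₀ < v := lt_of_le_of_ne hv.1 (fun e => hyp (e ▸ ht₀ ▸ rfl))
      intro hcon
      rcases Set.mem_uIcc.mp hcon with ⟨h1, h2⟩ | ⟨h1, h2⟩
      · exact hu'.not_ge h1
      · exact hv'.not_ge h1
  · refine trace_piece hR harc harc_uniq harc_refl (arc a b)
      (arc_closed harc harc_refl a b) ?_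
    intro x hx y hy hxp hyp
    obtain ⟨u, hu⟩ : x ∈ Set.range φ := φr ▸ hx
    obtain ⟨v, hv⟩ : y ∈ Set.range φ := φr ▸ hy
    intro hcon
    apply hp
    rw [← hu, ← hv, arc_eq_image_uIcc harc harc_uniq harc_refl φ φc φi] at hcon
    exact φr ▸ Set.image_subset_range φ _ hcon

end Trace

/-- Let `T` be a subcontinuum of a dendrite `D` which is the union of
the arcs `γ_{ij}` joining points `A_1,...,A_n`. If `p = A_i` is a common endpoint of
two (nondegenerate) arcs `γ_{j₁ i}`, `γ_{j₂ i} ⊆ T` with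
`γ_{j₁ i} ∩ γ_{j₂ i} = {p}`, then `p` is a cut point of `T`. -/
theorem stmt16 {D : Type*} [MetricSpace D] [CompactSpace D] [ConnectedSpace D]
    [LocallyConnectedSpace D]
    (hnocircle : ¬ ∃ f : Circle → D, Continuous f ∧ Function.Injective f)
    (arc : D → D → Set D)
    (harc : ∀ a b : D, a ≠ b → IsArc (arc a b) a b)
    (harc_uniq : ∀ (a b : D) (A : Set D), a ≠ b → IsArc A a b → A = arc a b)
    (harc_refl : ∀ a : D, arc a a = {a})
    (n : ℕ) (A : Fin n → D)
    (T : Set D) (hT : T = ⋃ (i : Fin n), ⋃ (j : Fin n), arc (A i) (A j))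
    (i j₁ j₂ : Fin n) (hj₁ : A j₁ ≠ A i) (hj₂ : A j₂ ≠ A i)
    (p : D) (hp : p = A i) (hpT : p ∈ T)
    (hmeet : arc (A j₁) (A i) ∩ arc (A j₂) (A i) = {p}) :
    ¬ IsPreconnected (T \ {p}) := by
  clear hnocircle hpT
  have hq1 : A j₁ ≠ p := hp ▸ hj₁
  have hq2 : A j₂ ≠ p := hp ▸ hj₂
  have hj12 : A j₂ ≠ A j₁ := by
    intro e
    apply hq1
    have hmem : A j₁ ∈ arc (A j₁) (A i) ∩ arc (A j₂) (A i) :=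
      ⟨left_mem harc harc_refl _ _, e ▸ left_mem harc harc_refl _ _⟩
    rw [hmeet] at hmem
    exact hmem
  have hparc : p ∈ arc (A j₂) (A j₁) := by
    have h2 : IsArc (arc (A j₂) (A i)) (A j₂) p := by rw [hp]; exact harc _ _ hj₂
    have h1 : IsArc (arc (A j₁) (A i)) p (A j₁) := by rw [hp]; exact (harc _ _ hj₁).symm
    have hcap : arc (A j₂) (A i) ∩ arc (A j₁) (A i) ⊆ {p} := by
      rw [Set.inter_comm, hmeet]
    have comb := concatArc h2 h1 hcap
    rw [(harc_uniq _ _ _ hj12 comb).symm]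
    right
    rw [hp]
    exact right_mem harc harc_refl _ _
  have hR₁ : ∀ x y : D, p ∉ arc x y → (p ∉ arc x (A j₁)) → (p ∉ arc y (A j₁)) := by
    intro x y hxy hx
    have hyx : p ∉ arc y x := by rw [arc_symm harc harc_uniq]; exact hxy
    exact trans_side harc harc_uniq harc_refl hyx hx
  have hR₂ : ∀ x y : D, p ∉ arc x y → (p ∈ arc x (A j₁)) → (p ∈ arc y (A j₁)) := by
    intro x y hxy hx
    by_contra hy
    have hyx : p ∉ arc y x := by rw [arc_symm harc harc_uniq]; exact hxy
    exact (trans_side harc harc_uniq harc_refl hxy hy) hx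
  set K₁ : Set D := ⋃ k : Fin n, ⋃ l : Fin n,
    {x ∈ arc (A k) (A l) | x = p ∨ p ∉ arc x (A j₁)} with hK₁
  set K₂ : Set D := ⋃ k : Fin n, ⋃ l : Fin n,
    {x ∈ arc (A k) (A l) | x = p ∨ p ∈ arc x (A j₁)} with hK₂
  have hK₁cl : IsClosed K₁ :=
    isClosed_iUnion_of_finite fun k => isClosed_iUnion_of_finite fun l =>
      trace_closed hR₁ harc harc_uniq harc_refl _ _
  have hK₂cl : IsClosed K₂ :=
    isClosed_iUnion_of_finite fun k => isClosed_iUnion_of_finite fun l =>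
      trace_closed hR₂ harc harc_uniq harc_refl _ _
  intro hpre
  have cover : T \ {p} ⊆ K₂ᶜ ∪ K₁ᶜ := by
    rintro x ⟨hxT, hxp⟩
    have hxp' : x ≠ p := hxp
    by_cases hc : p ∈ arc x (A j₁)
    · right
      intro hxK₁
      rw [hK₁] at hxK₁
      obtain ⟨k, hk⟩ := Set.mem_iUnion.mp hxK₁
      obtain ⟨l, hl⟩ := Set.mem_iUnion.mp hk
      rcases hl.2 with h | h
      · exact hxp' h
      · exact h hc
    · left
      intro hxK₂
      rw [hK₂] at hxK₂
      obtain ⟨k, hk⟩ := Set.mem_iUnion.mp hxK₂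
      obtain ⟨l, hl⟩ := Set.mem_iUnion.mp hk
      rcases hl.2 with h | h
      · exact hxp' h
      · exact hc h
  have hmemT : ∀ k : Fin n, A k ∈ T := by
    intro k
    rw [hT]
    exact Set.mem_iUnion.mpr ⟨k, Set.mem_iUnion.mpr ⟨k, left_mem harc harc_refl _ _⟩⟩
  have ne₁ : ((T \ {p}) ∩ K₂ᶜ).Nonempty := by
    refine ⟨A j₁, ⟨hmemT j₁, hq1⟩, ?_⟩
    intro hK
    rw [hK₂] at hK
    obtain ⟨k, hk⟩ := Set.mem_iUnion.mp hK
    obtain ⟨l, hl⟩ := Set.mem_iUnion.mp hk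
    rcases hl.2 with h | h
    · exact hq1 h
    · rw [harc_refl] at h
      exact hq1 (Set.mem_singleton_iff.mp h).symm
  have ne₂ : ((T \ {p}) ∩ K₁ᶜ).Nonempty := by
    refine ⟨A j₂, ⟨hmemT j₂, hq2⟩, ?_⟩
    intro hK
    rw [hK₁] at hK
    obtain ⟨k, hk⟩ := Set.mem_iUnion.mp hK
    obtain ⟨l, hl⟩ := Set.mem_iUnion.mp hk
    rcases hl.2 with h | h
    · exact hq2 h
    · exact h hparc
  obtain ⟨x, ⟨hxT, hxp⟩, hx2, hx1⟩ :=
    hpre K₂ᶜ K₁ᶜ hK₂cl.isOpen_compl hK₁cl.isOpen_compl cover ne₁ ne₂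
  rw [hT] at hxT
  obtain ⟨k, hk⟩ := Set.mem_iUnion.mp hxT
  obtain ⟨l, hl⟩ := Set.mem_iUnion.mp hk
  by_cases hc : p ∈ arc x (A j₁)
  · exact hx2 (Set.mem_iUnion.mpr ⟨k, Set.mem_iUnion.mpr ⟨l, hl, Or.inr hc⟩⟩)
  · exact hx1 (Set.mem_iUnion.mpr ⟨k, Set.mem_iUnion.mpr ⟨l, hl, Or.inr hc⟩⟩)
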